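/- With notation as in the local Gotzmann setup: let J be extremal with respect to >, m its maximal generator degree, V ⊆ S_m spanned by f_A = x^A + Σ_{B∈R} c_{AB} x^B for A ∈ F (F the exponents of monomials of J_m, R the standard exponents), and I = (V). If dim_K I_{m+1} = dim_K J_{m+1}, then the set { x_j f_A : A ∈ F, j ≥ max(A) } is a K-basis of I_{m+1}. -/

import Mathlib

open MvPolynomial Finsupp

/-- `I` is a monomial ideal: generated by monomials. -/
def IsMonomialIdeal {n : ℕ} {K : Type*} [Field K]
    (I : Ideal (MvPolynomial (Fin (n + 1)) K)) : Prop :=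
  ∃ S : Set (Fin (n + 1) →₀ ℕ),
    I = Ideal.span ((fun A => MvPolynomial.monomial A (1 : K)) '' S)

/-- The Borel-fixed condition. -/
def BorelFixed {n : ℕ} {K : Type*} [Field K]
    (I : Ideal (MvPolynomial (Fin (n + 1)) K)) : Prop :=
  IsMonomialIdeal I ∧
    ∀ (A : Fin (n + 1) →₀ ℕ) (i : Fin n),
      MvPolynomial.monomial (A + Finsupp.single i.succ 1) (1 : K) ∈ I →
      MvPolynomial.monomial (A + Finsupp.single i.castSucc 1) (1 : K) ∈ I

/-- `x^A` is a minimal monomial generator of the monomial ideal `I`. -/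
def MinGen {n : ℕ} {K : Type*} [Field K]
    (I : Ideal (MvPolynomial (Fin (n + 1)) K)) (A : Fin (n + 1) →₀ ℕ) : Prop :=
  MvPolynomial.monomial A (1 : K) ∈ I ∧
    ∀ i : Fin (n + 1), A i ≠ 0 →
      MvPolynomial.monomial (A - Finsupp.single i 1) (1 : K) ∉ I

/-- `gt` is a term order on exponent vectors. -/
def IsTermOrder {n : ℕ} (gt : (Fin (n + 1) →₀ ℕ) → (Fin (n + 1) →₀ ℕ) → Prop) : Prop :=
  (∀ A B C, gt A B → gt B C → gt A C) ∧
  (∀ A B, A ≠ B → gt A B ∨ gt B A) ∧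
  (∀ A, ¬ gt A A) ∧
  (∀ A B C, gt A B → gt (A + C) (B + C)) ∧
  (∀ A, A ≠ 0 → gt A 0)

/-- The dimension over `K` of the degree-`d` graded piece of an ideal
`I ⊆ K[x_0,…,x_n]`. -/
noncomputable def hilb {n : ℕ} {K : Type*} [Field K]
    (I : Ideal (MvPolynomial (Fin (n + 1)) K)) (d : ℕ) : ℕ :=
  Module.finrank K
    ↥(Submodule.restrictScalars K I ⊓
        MvPolynomial.homogeneousSubmodule (Fin (n + 1)) K d)


lemma exists_rel_max {α : Type*} (gt : α → α → Prop)
    (htrans : ∀ A B C, gt A B → gt B C → gt A C)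
    (htri : ∀ A B, A ≠ B → gt A B ∨ gt B A)
    (hirr : ∀ A, ¬ gt A A)
    (s : Finset α) : s.Nonempty → ∃ M ∈ s, ∀ e ∈ s, ¬ gt e M := by
  classical
  induction s using Finset.induction_on with
  | empty => intro h; simp at h
  | @insert a t _ ih =>
    intro _
    by_cases ht : t.Nonempty
    · obtain ⟨M, hM, hmax⟩ := ih ht
      by_cases hMa : gt M a
      · refine ⟨M, Finset.mem_insert_of_mem hM, ?_⟩
        intro e he
        rcases Finset.mem_insert.mp he with rfl | he'
        · exact fun h => hirr _ (htrans _ _ _ h hMa)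
        · exact hmax e he'
      · refine ⟨a, Finset.mem_insert_self a t, ?_⟩
        intro e he
        rcases Finset.mem_insert.mp he with rfl | he'
        · exact hirr _
        · intro hea
          by_cases heM : a = M
          · exact hmax e he' (heM ▸ hea)
          · rcases htri a M heM with h1 | h1
            · exact hmax e he' (htrans _ _ _ hea h1)
            · exact hMa h1
    · have h0 : t = ∅ := Finset.not_nonempty_iff_eq_empty.mp ht
      subst h0
      refine ⟨a, Finset.mem_insert_self a _, ?_⟩
      intro e he
      rcases Finset.mem_insert.mp he with rfl | he'
      · exact hirr _
      · simp at he'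

lemma key_inj {n : ℕ} {A A' : Fin (n+1) →₀ ℕ} {j j' : Fin (n+1)}
    (hA : ∀ l ∈ A.support, l ≤ j) (hA' : ∀ l ∈ A'.support, l ≤ j')
    (h : A + Finsupp.single j 1 = A' + Finsupp.single j' 1) : A = A' ∧ j = j' := by
  have hjj : j = j' := by
    by_contra hne
    have h1 : A j' = A' j' + 1 := by
      have := DFunLike.congr_fun h j'
      simpa [Finsupp.single_apply, hne] using this
    have h2 : A j + 1 = A' j := by
      have := DFunLike.congr_fun h j
      simpa [Finsupp.single_apply, Ne.symm hne] using this
    have hj'A : j' ∈ A.support := Finsupp.mem_support_iff.mpr (by omega)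
    have hjA' : j ∈ A'.support := Finsupp.mem_support_iff.mpr (by omega)
    exact hne (le_antisymm (hA' j hjA') (hA j' hj'A))
  subst hjj
  exact ⟨add_right_cancel h, rfl⟩


/-- key sublemma: homogeneous component of `r * x^A` for `x^A ∈ J` lies in the span
of degree-`d` monomials of `J`. -/
lemma homogComp_mul_monomial_mem {n : ℕ} {K : Type*} [Field K]
    (J : Ideal (MvPolynomial (Fin (n+1)) K)) (d : ℕ)
    (r : MvPolynomial (Fin (n+1)) K) (A : Fin (n+1) →₀ ℕ)
    (hA : MvPolynomial.monomial A (1:K) ∈ J) :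
    homogeneousComponent d (r * MvPolynomial.monomial A 1) ∈
      Submodule.span K ((fun C => MvPolynomial.monomial C (1:K)) ''
        {C | C.degree = d ∧ MvPolynomial.monomial C (1:K) ∈ J}) := by
  classical
  have hre : homogeneousComponent d (r * MvPolynomial.monomial A 1) =
      ∑ D ∈ r.support, homogeneousComponent d
        (MvPolynomial.monomial D (coeff D r) * MvPolynomial.monomial A 1) := by
    conv_lhs => rw [r.as_sum, Finset.sum_mul]
    rw [map_sum]
  rw [hre]
  refine Submodule.sum_mem _ ?_
  intro D _
  rw [monomial_mul, mul_one]
  have : homogeneousComponent d (MvPolynomial.monomial (D + A) (coeff D r)) =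
      if (D + A).degree = d then MvPolynomial.monomial (D + A) (coeff D r) else 0 := by
    ext E
    rw [coeff_homogeneousComponent]
    by_cases h3 : D + A = E
    · subst h3
      simp [coeff_monomial, apply_ite (coeff (D + A))]
    · simp [coeff_monomial, h3, apply_ite (coeff E)]
  rw [this]
  split_ifs with hd
  · have hmem : MvPolynomial.monomial (D + A) (1:K) ∈ J := by
      have := Ideal.mul_mem_left J (MvPolynomial.monomial D 1) hA
      rwa [monomial_mul, mul_one] at this
    have : MvPolynomial.monomial (D + A) (coeff D r) =
        (coeff D r) • MvPolynomial.monomial (D + A) (1:K) := by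
      rw [smul_monomial, smul_eq_mul, mul_one]
    rw [this]
    exact Submodule.smul_mem _ _ (Submodule.subset_span ⟨D + A, ⟨hd, hmem⟩, rfl⟩)
  · exact Submodule.zero_mem _

lemma homogComp_mem_monomial_span {n : ℕ} {K : Type*} [Field K]
    (J : Ideal (MvPolynomial (Fin (n+1)) K)) (S : Set (Fin (n+1) →₀ ℕ))
    (hJ : J = Ideal.span ((fun A => MvPolynomial.monomial A (1 : K)) '' S))
    (d : ℕ) (p : MvPolynomial (Fin (n+1)) K) (hp : p ∈ J) :
    homogeneousComponent d p ∈
      Submodule.span K ((fun C => MvPolynomial.monomial C (1:K)) ''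
        {C | C.degree = d ∧ MvPolynomial.monomial C (1:K) ∈ J}) := by
  classical
  have hp' : p ∈ Submodule.span (MvPolynomial (Fin (n+1)) K)
      ((fun A => MvPolynomial.monomial A (1 : K)) '' S) := by rw [hJ] at hp; exact hp
  obtain ⟨c, hsupp, hsum⟩ := Submodule.mem_span_set.mp hp'
  rw [← hsum, map_finsuppSum]
  refine Submodule.sum_mem _ ?_
  intro f hf
  obtain ⟨A, _, rfl⟩ := hsupp hf
  simp only [smul_eq_mul]
  refine homogComp_mul_monomial_mem J d (c _) A ?_
  rw [hJ]
  exact Ideal.subset_span ⟨A, ‹A ∈ S›, rfl⟩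


lemma borel_descent {n : ℕ} {K : Type*} [Field K]
    (J : Ideal (MvPolynomial (Fin (n+1)) K))
    (hB : ∀ (A : Fin (n + 1) →₀ ℕ) (i : Fin n),
      MvPolynomial.monomial (A + Finsupp.single i.succ 1) (1 : K) ∈ J →
      MvPolynomial.monomial (A + Finsupp.single i.castSucc 1) (1 : K) ∈ J)
    (C : Fin (n+1) →₀ ℕ) (i j : Fin (n+1)) (hij : i < j)
    (hCi : C i ≠ 0) (hCj : C j ≠ 0)
    (hmem : MvPolynomial.monomial (C - Finsupp.single i 1) (1:K) ∈ J) :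
    MvPolynomial.monomial (C - Finsupp.single j 1) (1:K) ∈ J := by
  classical
  have hij' : (i : ℕ) < (j : ℕ) := hij
  have hj' : (j : ℕ) < n + 1 := j.isLt
  have hne : i ≠ j := ne_of_lt hij
  obtain ⟨D, hD⟩ : ∃ D, D = C - Finsupp.single i 1 - Finsupp.single j 1 := ⟨_, rfl⟩
  have hCi' : 1 ≤ C i := Nat.one_le_iff_ne_zero.mpr hCi
  have hCj' : 1 ≤ C j := Nat.one_le_iff_ne_zero.mpr hCj
  have hD1 : C - Finsupp.single i 1 = D + Finsupp.single j 1 := by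
    ext l
    rw [hD]
    simp only [Finsupp.tsub_apply, Finsupp.add_apply, Finsupp.single_apply]
    rcases eq_or_ne i l with rfl | h1
    · simp [Ne.symm hne]
    · rcases eq_or_ne j l with rfl | h2
      · simp [h1]
        omega
      · simp [h1, h2]
  have hD2 : C - Finsupp.single j 1 = D + Finsupp.single i 1 := by
    ext l
    rw [hD]
    simp only [Finsupp.tsub_apply, Finsupp.add_apply, Finsupp.single_apply]
    rcases eq_or_ne i l with rfl | h1
    · simp [Ne.symm hne]
      omega
    · rcases eq_or_ne j l with rfl | h2
      · simp [h1]
      · simp [h1, h2]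
  have main : ∀ k : ℕ, k ≤ (j : ℕ) - (i : ℕ) →
      MvPolynomial.monomial (D + Finsupp.single (⟨(j : ℕ) - k, by omega⟩ : Fin (n+1)) 1) (1:K) ∈ J := by
    intro k
    induction k with
    | zero =>
      intro _
      have hjj : (⟨(j : ℕ) - 0, by omega⟩ : Fin (n+1)) = j := by ext; simp
      rw [hjj, ← hD1]
      exact hmem
    | succ k ih =>
      intro hk
      have prev := ih (by omega)
      have hn : (j : ℕ) - (k+1) < n := by omega
      set i' : Fin n := ⟨(j : ℕ) - (k+1), hn⟩ with hi'
      have h1 : i'.succ = (⟨(j : ℕ) - k, by omega⟩ : Fin (n+1)) := by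
        ext; simp [hi', Fin.succ]; omega
      have h2 : i'.castSucc = (⟨(j : ℕ) - (k+1), by omega⟩ : Fin (n+1)) := by
        ext; simp [hi']
      have := hB D i' (by rw [h1]; exact prev)
      rwa [h2] at this
  have := main ((j : ℕ) - (i : ℕ)) le_rfl
  have hii : (⟨(j : ℕ) - ((j : ℕ) - (i : ℕ)), by omega⟩ : Fin (n+1)) = i := by ext; simp; omega
  rw [hii] at this
  rwa [hD2]

/-- In the local Gotzmann setup: if `dim I_{m+1} = dim J_{m+1}`, then the family
`{x_j · f_A : A ∈ F, j ≥ max(A)}` is a `K`-basis of `I_{m+1}` — it is linearly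
independent and spans the degree-`(m+1)` graded piece of `I`. -/
theorem local_gotzmann_basis {n : ℕ} {K : Type*} [Field K] [CharZero K] [IsAlgClosed K]
    (J : Ideal (MvPolynomial (Fin (n + 1)) K)) (hBorel : BorelFixed J)
    (gt : (Fin (n + 1) →₀ ℕ) → (Fin (n + 1) →₀ ℕ) → Prop) (hgt : IsTermOrder gt)
    (m : ℕ)
    (hm : ∀ A : Fin (n + 1) →₀ ℕ, MinGen J A → (A.sum fun _ e => e) ≤ m)
    (hm' : ∃ A : Fin (n + 1) →₀ ℕ, MinGen J A ∧ (A.sum fun _ e => e) = m)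
    (hext : ∀ A B : Fin (n + 1) →₀ ℕ,
      (A.sum fun _ e => e) = m → (B.sum fun _ e => e) = m →
      MvPolynomial.monomial A (1 : K) ∈ J → MvPolynomial.monomial B (1 : K) ∉ J →
      gt A B)
    (F R : Finset (Fin (n + 1) →₀ ℕ))
    (hF : ∀ A, A ∈ F ↔ ((A.sum fun _ e => e) = m ∧ MvPolynomial.monomial A (1 : K) ∈ J))
    (hR : ∀ B, B ∈ R ↔ ((B.sum fun _ e => e) = m ∧ MvPolynomial.monomial B (1 : K) ∉ J))
    (c : (Fin (n + 1) →₀ ℕ) → (Fin (n + 1) →₀ ℕ) → K)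
    (fA : (Fin (n + 1) →₀ ℕ) → MvPolynomial (Fin (n + 1)) K)
    (hfA : ∀ A, fA A = MvPolynomial.monomial A (1 : K) +
        ∑ B ∈ R, c A B • MvPolynomial.monomial B (1 : K))
    (I : Ideal (MvPolynomial (Fin (n + 1)) K))
    (hI : I = Ideal.span { f | ∃ A ∈ F, f = fA A })
    (hdim : hilb I (m + 1) = hilb J (m + 1)) :
    LinearIndependent K
      (fun p : {p : (Fin (n + 1) →₀ ℕ) × Fin (n + 1) //
          p.1 ∈ F ∧ ∀ l ∈ p.1.support, l ≤ p.2} =>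
        MvPolynomial.X p.1.2 * fA p.1.1) ∧
    Submodule.span K
      (Set.range (fun p : {p : (Fin (n + 1) →₀ ℕ) × Fin (n + 1) //
          p.1 ∈ F ∧ ∀ l ∈ p.1.support, l ≤ p.2} =>
        MvPolynomial.X p.1.2 * fA p.1.1)) =
      Submodule.restrictScalars K I ⊓
        MvPolynomial.homogeneousSubmodule (Fin (n + 1)) K (m + 1) := by
  
  classical
  obtain ⟨htrans, htri, hirr, hadd, _⟩ := hgt
  -- notation
  have hdegsum : ∀ A : Fin (n+1) →₀ ℕ, (A.sum fun _ e => e) = A.degree := fun _ => rfl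
  have hdegadd : ∀ E D : Fin (n+1) →₀ ℕ, (E + D).degree = E.degree + D.degree := by
    intro E D; simp [Finsupp.degree_eq_weight_one, map_add]
  have hdegsingle : ∀ j : Fin (n+1), (Finsupp.single j 1 : Fin (n+1) →₀ ℕ).degree = 1 := by
    intro j
    exact (hdegsum _).symm.trans (by simp [Finsupp.sum_single_index])
  have hXmon : ∀ (E : Fin (n+1) →₀ ℕ) (j : Fin (n+1)) (k : K),
      X j * MvPolynomial.monomial E k = MvPolynomial.monomial (E + Finsupp.single j 1) k := by
    intro E j k
    rw [show (X j : MvPolynomial (Fin (n+1)) K) = MvPolynomial.monomial (Finsupp.single j 1) 1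
      from rfl, monomial_mul, one_mul]
    exact congrArg (fun E' => MvPolynomial.monomial E' k) (add_comm _ _)
  have hv : ∀ (A : Fin (n+1) →₀ ℕ) (j : Fin (n+1)),
      X j * fA A = MvPolynomial.monomial (A + Finsupp.single j 1) (1:K) +
        ∑ B ∈ R, c A B • MvPolynomial.monomial (B + Finsupp.single j 1) (1:K) := by
    intro A j
    rw [hfA, mul_add, Finset.mul_sum, hXmon]
    congr 1
    refine Finset.sum_congr rfl fun B _ => ?_
    rw [mul_smul_comm, hXmon]
  -- the index type
  -- linear independence
  have hli : LinearIndependent K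
      (fun p : {p : (Fin (n + 1) →₀ ℕ) × Fin (n + 1) //
          p.1 ∈ F ∧ ∀ l ∈ p.1.support, l ≤ p.2} =>
        MvPolynomial.X p.1.2 * fA p.1.1) := by
    rw [linearIndependent_iff']
    intro s g hsum i hi
    by_contra hgi
    set s' := s.filter (fun p => g p ≠ 0) with hs'
    have hs'ne : s'.Nonempty := ⟨i, Finset.mem_filter.mpr ⟨hi, hgi⟩⟩
    obtain ⟨M, hME, hMmax⟩ := exists_rel_max gt htrans htri hirr
      (s'.image (fun p => p.1.1 + Finsupp.single p.1.2 1)) (hs'ne.image _)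
    obtain ⟨p₀, hp₀s', hp₀⟩ := Finset.mem_image.mp hME
    have hgp₀ : g p₀ ≠ 0 := (Finset.mem_filter.mp hp₀s').2
    have hp₀s : p₀ ∈ s := (Finset.mem_filter.mp hp₀s').1
    -- no `B`-term can hit `M`
    have hBne : ∀ p : {p : (Fin (n + 1) →₀ ℕ) × Fin (n + 1) //
        p.1 ∈ F ∧ ∀ l ∈ p.1.support, l ≤ p.2}, p ∈ s' → ∀ B ∈ R,
        B + Finsupp.single p.1.2 1 ≠ M := by
      intro p hp B hB heq
      have hAF : p.1.1 ∈ F := p.2.1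
      have hgtAB : gt p.1.1 B :=
        hext p.1.1 B ((hF _).mp hAF).1 ((hR B).mp hB).1 ((hF _).mp hAF).2 ((hR B).mp hB).2
      have := hadd _ _ (Finsupp.single p.1.2 1) hgtAB
      rw [heq] at this
      exact hMmax _ (Finset.mem_image.mpr ⟨p, hp, rfl⟩) this
    have hcoeff0 : ∀ p : {p : (Fin (n + 1) →₀ ℕ) × Fin (n + 1) //
        p.1 ∈ F ∧ ∀ l ∈ p.1.support, l ≤ p.2}, coeff M (X p.1.2 * fA p.1.1) =
        (if p.1.1 + Finsupp.single p.1.2 1 = M then (1:K) else 0) +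
          ∑ B ∈ R, c p.1.1 B * (if B + Finsupp.single p.1.2 1 = M then (1:K) else 0) := by
      intro p
      rw [hv, coeff_add, coeff_monomial, coeff_sum]
      congr 1
      refine Finset.sum_congr rfl fun B _ => ?_
      rw [MvPolynomial.coeff_smul, coeff_monomial, smul_eq_mul]
    have hcM : coeff M (∑ p ∈ s, g p • (X p.1.2 * fA p.1.1)) = g p₀ := by
      rw [coeff_sum]
      have : ∀ p ∈ s, p ≠ p₀ → g p * coeff M (X p.1.2 * fA p.1.1) = 0 := by
        intro p hp hne
        by_cases hgp : g p = 0
        · rw [hgp, zero_mul]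
        · have hps' : p ∈ s' := Finset.mem_filter.mpr ⟨hp, hgp⟩
          have h1 : p.1.1 + Finsupp.single p.1.2 1 ≠ M := by
            intro heq
            rw [← hp₀] at heq
            obtain ⟨e1, e2⟩ := key_inj p.2.2 p₀.2.2 heq
            exact hne (Subtype.ext (Prod.ext e1 e2))
          rw [hcoeff0, if_neg h1]
          have h2 : ∀ B ∈ R, c p.1.1 B *
              (if B + Finsupp.single p.1.2 1 = M then (1:K) else 0) = 0 := by
            intro B hB
            rw [if_neg (hBne p hps' B hB), mul_zero]
          rw [Finset.sum_congr rfl h2, Finset.sum_const_zero, zero_add, mul_zero]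
      have hsimp : ∀ p ∈ s, coeff M (g p • (X p.1.2 * fA p.1.1)) =
          g p * coeff M (X p.1.2 * fA p.1.1) := by
        intro p _; rw [MvPolynomial.coeff_smul, smul_eq_mul]
      rw [Finset.sum_congr rfl hsimp, Finset.sum_eq_single p₀ this (fun h => absurd hp₀s h)]
      rw [hcoeff0, if_pos hp₀]
      have h2 : ∀ B ∈ R, c p₀.1.1 B *
          (if B + Finsupp.single p₀.1.2 1 = M then (1:K) else 0) = 0 := by
        intro B hB
        rw [if_neg (hBne p₀ hp₀s' B hB), mul_zero]
      rw [Finset.sum_congr rfl h2, Finset.sum_const_zero, add_zero, mul_one]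
    rw [hsum, MvPolynomial.coeff_zero] at hcM
    exact hgp₀ hcM.symm
  refine ⟨hli, ?_⟩
  -- span ≤ I_{m+1}
  have hfA_I : ∀ A ∈ F, fA A ∈ I := by
    intro A hA
    rw [hI]
    exact Ideal.subset_span ⟨A, hA, rfl⟩
  have hfA_hom : ∀ A ∈ F, fA A ∈ homogeneousSubmodule (Fin (n+1)) K m := by
    intro A hA
    rw [hfA]
    refine Submodule.add_mem _ ?_ (Submodule.sum_mem _ fun B hB => Submodule.smul_mem _ _ ?_)
    · exact (mem_homogeneousSubmodule _ _).mpr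
        (isHomogeneous_monomial _ (by rw [← hdegsum]; exact ((hF A).mp hA).1))
    · exact (mem_homogeneousSubmodule _ _).mpr
        (isHomogeneous_monomial _ (by rw [← hdegsum]; exact ((hR B).mp hB).1))
  have hWle : Submodule.span K
      (Set.range (fun p : {p : (Fin (n + 1) →₀ ℕ) × Fin (n + 1) //
          p.1 ∈ F ∧ ∀ l ∈ p.1.support, l ≤ p.2} =>
        MvPolynomial.X p.1.2 * fA p.1.1)) ≤
      Submodule.restrictScalars K I ⊓
        MvPolynomial.homogeneousSubmodule (Fin (n + 1)) K (m + 1) := by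
    rw [Submodule.span_le]
    rintro q ⟨p, rfl⟩
    constructor
    · exact Ideal.mul_mem_left I _ (hfA_I p.1.1 p.2.1)
    · have h0 : (fA p.1.1).IsHomogeneous m := hfA_hom p.1.1 p.2.1
      have h1 : (MvPolynomial.X p.1.2 * fA p.1.1).IsHomogeneous (1 + m) :=
        (isHomogeneous_X K p.1.2).mul h0
      rw [add_comm 1 m] at h1
      exact h1
  -- monomial decomposition of J_{m+1}
  have hdesc : ∀ C : Fin (n+1) →₀ ℕ, C.degree = m + 1 → MvPolynomial.monomial C (1:K) ∈ J →
      ∃ A : Fin (n+1) →₀ ℕ, ∃ j : Fin (n+1), A ∈ F ∧ (∀ l ∈ A.support, l ≤ j) ∧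
        C = A + Finsupp.single j 1 := by
    intro C hCdeg hCmem
    have hCne : C ≠ 0 := by
      intro h
      rw [h, map_zero] at hCdeg
      omega
    have hCsupp : C.support.Nonempty := by
      rw [Finsupp.support_nonempty_iff]; exact hCne
    set j := C.support.max' hCsupp with hj
    have hCj : C j ≠ 0 := Finsupp.mem_support_iff.mp (C.support.max'_mem hCsupp)
    have hnotmin : ¬ MinGen J C := by
      intro h
      have := hm C h
      rw [hdegsum, hCdeg] at this
      omega
    rw [MinGen] at hnotmin
    push_neg at hnotmin
    obtain ⟨i, hCi, hImem⟩ := hnotmin hCmem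
    have hAmem : MvPolynomial.monomial (C - Finsupp.single j 1) (1:K) ∈ J := by
      rcases eq_or_ne i j with rfl | hne
      · exact hImem
      · have hilt : i < j := lt_of_le_of_ne (C.support.le_max' i (Finsupp.mem_support_iff.mpr hCi)) hne
        exact borel_descent J hBorel.2 C i j hilt hCi hCj hImem
    refine ⟨C - Finsupp.single j 1, j, ?_, ?_, ?_⟩
    · rw [hF]
      constructor
      · rw [hdegsum]
        have h1 : C = (C - Finsupp.single j 1) + Finsupp.single j 1 := by
          ext l
          simp only [Finsupp.tsub_apply, Finsupp.add_apply, Finsupp.single_apply]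
          rcases eq_or_ne j l with rfl | h2
          · simp; omega
          · simp [h2]
        have h2 := hdegadd (C - Finsupp.single j 1) (Finsupp.single j 1)
        rw [← h1, hdegsingle, hCdeg] at h2
        omega
      · exact hAmem
    · intro l hl
      have h1 : ((C - Finsupp.single j 1 : Fin (n+1) →₀ ℕ)) l ≠ 0 := Finsupp.mem_support_iff.mp hl
      have h2 : C l ≠ 0 := by
        rw [Finsupp.tsub_apply] at h1
        omega
      exact C.support.le_max' l (Finsupp.mem_support_iff.mpr h2)
    · ext l
      simp only [Finsupp.tsub_apply, Finsupp.add_apply, Finsupp.single_apply]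
      rcases eq_or_ne j l with rfl | h2
      · simp; omega
      · simp [h2]
  -- finiteness of the index type
  haveI hfinP : Finite {p : (Fin (n + 1) →₀ ℕ) × Fin (n + 1) //
      p.1 ∈ F ∧ ∀ l ∈ p.1.support, l ≤ p.2} := by
    refine Finite.of_injective
      (fun p => ((⟨p.1.1, p.2.1⟩ : {x // x ∈ F}), p.1.2)) ?_
    intro p q h
    refine Subtype.ext (Prod.ext ?_ ?_)
    · exact congrArg (fun x : {x // x ∈ F} × Fin (n+1) => (x.1 : Fin (n+1) →₀ ℕ)) h
    · exact congrArg (fun x : {x // x ∈ F} × Fin (n+1) => x.2) h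
  haveI hftP := Fintype.ofFinite {p : (Fin (n + 1) →₀ ℕ) × Fin (n + 1) //
      p.1 ∈ F ∧ ∀ l ∈ p.1.support, l ≤ p.2}
  -- J_{m+1} is inside the span of the monomials x^(A+e_j)
  set u : {p : (Fin (n + 1) →₀ ℕ) × Fin (n + 1) //
      p.1 ∈ F ∧ ∀ l ∈ p.1.support, l ≤ p.2} → MvPolynomial (Fin (n+1)) K :=
    fun p => MvPolynomial.monomial (p.1.1 + Finsupp.single p.1.2 1) (1:K) with hu
  have hJMle : Submodule.restrictScalars K J ⊓
      MvPolynomial.homogeneousSubmodule (Fin (n + 1)) K (m + 1) ≤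
      Submodule.span K (Set.range u) := by
    rintro q ⟨hq1, hq2⟩
    obtain ⟨S, hS⟩ := hBorel.1
    have hq' := homogComp_mem_monomial_span J S hS (m+1) q hq1
    have hqq : homogeneousComponent (m+1) q = q := by
      ext E
      rw [coeff_homogeneousComponent]
      split_ifs with h1
      · rfl
      · exact ((mem_homogeneousSubmodule _ _).mp hq2).coeff_eq_zero h1 |>.symm
    rw [hqq] at hq'
    refine Submodule.span_le.mpr ?_ hq'
    rintro w ⟨C, ⟨hC1, hC2⟩, rfl⟩
    obtain ⟨A, j, hAF, hAsupp, hCAj⟩ := hdesc C hC1 hC2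
    exact Submodule.subset_span ⟨⟨(A, j), hAF, hAsupp⟩, by rw [hu, hCAj]⟩
  -- finite dimensionality
  have hhom_le : MvPolynomial.homogeneousSubmodule (Fin (n+1)) K (m+1) ≤
      MvPolynomial.restrictTotalDegree (Fin (n+1)) K (m+1) := by
    intro q hq
    rw [mem_restrictTotalDegree]
    exact ((mem_homogeneousSubmodule _ _).mp hq).totalDegree_le
  haveI hfd1 : FiniteDimensional K
      (MvPolynomial.homogeneousSubmodule (Fin (n+1)) K (m+1)) :=
    Submodule.finiteDimensional_of_le hhom_le
  haveI hfd2 : FiniteDimensional K ↥(Submodule.restrictScalars K I ⊓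
      MvPolynomial.homogeneousSubmodule (Fin (n + 1)) K (m + 1)) :=
    Submodule.finiteDimensional_of_le inf_le_right
  haveI hfd3 : FiniteDimensional K ↥(Submodule.restrictScalars K J ⊓
      MvPolynomial.homogeneousSubmodule (Fin (n + 1)) K (m + 1)) :=
    Submodule.finiteDimensional_of_le inf_le_right
  haveI hfd4 : FiniteDimensional K ↥(Submodule.span K (Set.range u)) :=
    FiniteDimensional.span_of_finite K (Set.finite_range u)
  -- rank computations
  have h1 : Module.finrank K ↥(Submodule.span K
      (Set.range (fun p : {p : (Fin (n + 1) →₀ ℕ) × Fin (n + 1) //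
          p.1 ∈ F ∧ ∀ l ∈ p.1.support, l ≤ p.2} =>
        MvPolynomial.X p.1.2 * fA p.1.1))) =
      Fintype.card {p : (Fin (n + 1) →₀ ℕ) × Fin (n + 1) //
          p.1 ∈ F ∧ ∀ l ∈ p.1.support, l ≤ p.2} :=
    finrank_span_eq_card hli
  have h2 : Module.finrank K ↥(Submodule.restrictScalars K J ⊓
      MvPolynomial.homogeneousSubmodule (Fin (n + 1)) K (m + 1)) ≤
      Module.finrank K ↥(Submodule.span K (Set.range u)) :=
    Submodule.finrank_mono hJMle
  have h3 : Module.finrank K ↥(Submodule.span K (Set.range u)) ≤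
      Fintype.card {p : (Fin (n + 1) →₀ ℕ) × Fin (n + 1) //
          p.1 ∈ F ∧ ∀ l ∈ p.1.support, l ≤ p.2} := by
    refine le_trans (finrank_span_le_card (Set.range u)) ?_
    rw [Set.toFinset_range]
    exact le_trans (Finset.card_image_le) (by rw [Finset.card_univ])
  have h4 : Module.finrank K ↥(Submodule.restrictScalars K I ⊓
      MvPolynomial.homogeneousSubmodule (Fin (n + 1)) K (m + 1)) =
      Module.finrank K ↥(Submodule.restrictScalars K J ⊓
      MvPolynomial.homogeneousSubmodule (Fin (n + 1)) K (m + 1)) := hdim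
  exact (Submodule.eq_of_le_of_finrank_le hWle (by omega))
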